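/- Let k ≥ 2 be an integer, a a real number, L > 0, and let f be of class C^k on [a, a+L]. Then for every j ∈ {1, …, k−1} we have sup_{a ≤ x ≤ a+L} |f^{(j)}(x)| ≤ ((2k)^{2k}/L^{j})·sup_{a ≤ x ≤ a+L} |f(x)| + L^{k−j}·sup_{a ≤ x ≤ a+L} |f^{(k)}(x)|. -/

import Mathlib

open Set

def fdiff (δ : ℝ) : ℕ → (ℝ → ℝ) → ℝ → ℝ
  | 0, f => f
  | (m+1), f => fdiff δ m (fun x => f (x + δ) - f x)

lemma fdiff_bound (δ : ℝ) (hδ : 0 < δ) :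
    ∀ (m : ℕ) (f : ℝ → ℝ) (c M : ℝ),
      (∀ x ∈ Icc c (c + m * δ), |f x| ≤ M) → |fdiff δ m f c| ≤ 2 ^ m * M := by
  intro m
  induction m with
  | zero =>
    intro f c M h
    simpa [fdiff] using h c (by simp)
  | succ m ih =>
    intro f c M h
    have h' : ∀ x ∈ Icc c (c + m * δ), |f (x + δ) - f x| ≤ 2 * M := by
      intro x hx
      obtain ⟨hx1, hx2⟩ := hx
      have h1 : |f (x + δ)| ≤ M := h (x + δ) ⟨by linarith, by push_cast; linarith⟩
      have h2 : |f x| ≤ M := h x ⟨hx1, by push_cast; nlinarith [hδ.le]⟩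
      calc |f (x + δ) - f x| ≤ |f (x + δ)| + |f x| := abs_sub _ _
        _ ≤ 2 * M := by linarith
    have := ih (fun x => f (x + δ) - f x) c (2 * M) h'
    calc |fdiff δ (m+1) f c| = |fdiff δ m (fun x => f (x + δ) - f x) c| := rfl
      _ ≤ 2 ^ m * (2 * M) := this
      _ = 2 ^ (m+1) * M := by ring

lemma fdiff_mvt (δ : ℝ) (hδ : 0 < δ) :
    ∀ (m : ℕ) (D : ℕ → ℝ → ℝ) (c : ℝ),
      (∀ i ≤ m, ContinuousOn (D i) (Icc c (c + m * δ))) →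
      (∀ i < m, ∀ x ∈ Ioo c (c + m * δ), HasDerivAt (D i) (D (i+1) x) x) →
      ∃ ξ ∈ Icc c (c + m * δ), D m ξ * δ ^ m = fdiff δ m (D 0) c := by
  intro m
  induction m with
  | zero =>
    intro D c _ _
    exact ⟨c, by simp, by simp [fdiff]⟩
  | succ m ih =>
    intro D c Hc Hd
    have hmδ : (m : ℝ) * δ + δ = ((m : ℕ) + 1 : ℕ) * δ := by push_cast; ring
    set D' : ℕ → ℝ → ℝ := fun i x => D i (x + δ) - D i x with hD'
    have Hc' : ∀ i ≤ m, ContinuousOn (D' i) (Icc c (c + m * δ)) := by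
      intro i hi
      have hci := Hc i (by omega)
      have c1 : ContinuousOn (fun x => D i (x + δ)) (Icc c (c + m * δ)) := by
        apply hci.comp ((continuous_id.add continuous_const).continuousOn)
        intro x hx
        obtain ⟨hx1, hx2⟩ := hx
        simp only [Pi.add_apply, id_eq]
        push_cast
        exact ⟨by linarith, by linarith⟩
      exact c1.sub (hci.mono (Icc_subset_Icc le_rfl (by push_cast; nlinarith [hδ.le])))
    have Hd' : ∀ i < m, ∀ x ∈ Ioo c (c + m * δ), HasDerivAt (D' i) (D' (i+1) x) x := by
      intro i hi x hx
      obtain ⟨hx1, hx2⟩ := hx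
      have h1 : HasDerivAt (D i) (D (i+1) (x + δ)) (x + δ) :=
        Hd i (by omega) (x + δ) ⟨by linarith, by push_cast; linarith⟩
      have h2 : HasDerivAt (D i) (D (i+1) x) x :=
        Hd i (by omega) x ⟨hx1, by push_cast; nlinarith⟩
      have h3 : HasDerivAt (fun x => D i (x + δ)) (D (i+1) (x + δ) * 1) x :=
        HasDerivAt.comp x h1 ((hasDerivAt_id x).add_const δ)
      have h4 := h3.sub h2
      simp only [mul_one] at h4
      exact h4
    obtain ⟨ξ, hξmem, hξ⟩ := ih D' c Hc' Hd'
    obtain ⟨hξ1, hξ2⟩ := hξmem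
    -- MVT on [ξ, ξ+δ]
    have hlt : ξ < ξ + δ := by linarith
    have hcont : ContinuousOn (D m) (Icc ξ (ξ + δ)) := by
      apply (Hc m (by omega)).mono
      apply Icc_subset_Icc hξ1 (by push_cast; linarith)
    have hder : ∀ x ∈ Ioo ξ (ξ + δ), HasDerivAt (D m) (D (m+1) x) x := by
      intro x hx
      obtain ⟨hx1, hx2⟩ := hx
      exact Hd m (by omega) x ⟨by linarith, by push_cast; linarith⟩
    obtain ⟨ζ, hζmem, hζ⟩ := exists_hasDerivAt_eq_slope (D m) (D (m+1)) hlt hcont hder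
    obtain ⟨hζ1, hζ2⟩ := hζmem
    refine ⟨ζ, ⟨by linarith, by push_cast; linarith⟩, ?_⟩
    have hδ0 : δ ≠ 0 := ne_of_gt hδ
    have key : D (m+1) ζ * δ = D m (ξ + δ) - D m ξ := by
      rw [hζ, add_sub_cancel_left]; field_simp
    have hfd : fdiff δ (m+1) (D 0) c = fdiff δ m (D' 0) c := rfl
    calc D (m+1) ζ * δ ^ (m+1) = (D (m+1) ζ * δ) * δ ^ m := by ring
      _ = (D m (ξ + δ) - D m ξ) * δ ^ m := by rw [key]
      _ = D' m ξ * δ ^ m := rfl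
      _ = fdiff δ m (D' 0) c := hξ
      _ = fdiff δ (m+1) (D 0) c := rfl

theorem stmt_10 (k : ℕ) (hk : 2 ≤ k) (a L : ℝ) (hL : 0 < L)
    (f : ℝ → ℝ) (hf : ContDiffOn ℝ k f (Set.Icc a (a + L))) :
    ∀ j, 1 ≤ j → j ≤ k - 1 →
      (⨆ x : Set.Icc a (a + L), |iteratedDerivWithin j f (Set.Icc a (a + L)) x|) ≤
        ((2*(k:ℝ)) ^ (2*k) / L ^ j) * (⨆ x : Set.Icc a (a + L), |f x|)
        + L ^ (k - j) * (⨆ x : Set.Icc a (a + L), |iteratedDerivWithin k f (Set.Icc a (a + L)) x|) := by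
  intro j hj1 hjk1
  have hjk : j < k := by omega
  have hab : a < a + L := by linarith
  set I : Set ℝ := Set.Icc a (a + L) with hI
  have haI : a ∈ I := ⟨le_refl a, by linarith⟩
  haveI : Nonempty I := ⟨⟨a, haI⟩⟩
  have hU : UniqueDiffOn ℝ I := uniqueDiffOn_Icc hab
  set D : ℕ → ℝ → ℝ := fun i => iteratedDerivWithin i f I with hDdef
  set M : ℕ → ℝ := fun i => ⨆ x : I, |D i x| with hMdef
  have hD0 : D 0 = f := iteratedDerivWithin_zero
  have hcont : ∀ i, i ≤ k → ContinuousOn (D i) I := by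
    intro i hi
    exact hf.continuousOn_iteratedDerivWithin (by exact_mod_cast hi) hU
  have hderivW : ∀ i, i < k → ∀ x ∈ I, HasDerivWithinAt (D i) (D (i+1) x) I x := by
    intro i hik x hx
    have hdiff : DifferentiableOn ℝ (D i) I :=
      hf.differentiableOn_iteratedDerivWithin (by exact_mod_cast hik) hU
    have h1 := (hdiff x hx).hasDerivWithinAt
    have h2 : D (i+1) x = derivWithin (D i) I x := congrFun iteratedDerivWithin_succ x
    rwa [← h2] at h1
  have hBdd : ∀ i, i ≤ k → BddAbove (Set.range fun x : I => |D i x|) := by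
    intro i hi
    have h1 : BddAbove ((fun x => |D i x|) '' I) :=
      (isCompact_Icc.image_of_continuousOn ((hcont i hi).abs)).bddAbove
    rwa [Set.image_eq_range] at h1
  have hMle : ∀ i, i ≤ k → ∀ x, x ∈ I → |D i x| ≤ M i := by
    intro i hi x hx
    exact le_ciSup (hBdd i hi) ⟨x, hx⟩
  have hMnn : ∀ i, i ≤ k → 0 ≤ M i := by
    intro i hi
    exact le_trans (abs_nonneg _) (hMle i hi a haI)
  -- existence of a point with small i-th derivative
  have hsmall : ∀ i, 1 ≤ i → i ≤ k →
      ∃ ξ ∈ I, |D i ξ| ≤ (2*(i:ℝ))^i * M 0 / L^i := by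
    intro i h1 hik
    have hi0 : (0:ℝ) < (i:ℝ) := by exact_mod_cast h1
    set δ : ℝ := L / i with hδdef
    have hδ : 0 < δ := div_pos hL hi0
    have hspan : a + (i:ℝ) * δ = a + L := by rw [hδdef]; field_simp
    have hI' : Set.Icc a (a + (i:ℝ) * δ) = I := by rw [hspan]
    have hIoo : Set.Ioo a (a + (i:ℝ) * δ) = Set.Ioo a (a + L) := by rw [hspan]
    obtain ⟨ξ, hmem, hξ⟩ := fdiff_mvt δ hδ i D a
      (by rw [hI']; exact fun i' hi' => hcont i' (le_trans hi' hik))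
      (by
        rw [hIoo]
        intro i' hi' x hx
        exact (hderivW i' (lt_of_lt_of_le hi' hik) x (Ioo_subset_Icc_self hx)).hasDerivAt
          (Icc_mem_nhds hx.1 hx.2))
    rw [hI'] at hmem
    have hb : |fdiff δ i (D 0) a| ≤ 2^i * M 0 := by
      apply fdiff_bound δ hδ i (D 0) a (M 0)
      intro x hx
      exact hMle 0 (by omega) x (hI' ▸ hx)
    have hδpow : (0:ℝ) < δ ^ i := pow_pos hδ i
    have habs : |D i ξ| * δ ^ i = |fdiff δ i (D 0) a| := by
      rw [← hξ, abs_mul, abs_of_pos hδpow]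
    refine ⟨ξ, hmem, ?_⟩
    have h2 : |D i ξ| * δ ^ i ≤ 2^i * M 0 := by rw [habs]; exact hb
    have e1 : (2*(i:ℝ))^i * M 0 / L^i = 2^i * M 0 / δ^i := by
      have hii : ((i:ℝ))^i ≠ 0 := by positivity
      have hLi : L^i ≠ 0 := by positivity
      rw [hδdef, div_pow, mul_pow]
      field_simp
    rw [e1]
    exact (le_div_iff₀ hδpow).2 h2
  -- one-step inequality
  have hstep : ∀ i, 1 ≤ i → i < k →
      M i ≤ (2*(i:ℝ))^i * M 0 / L^i + L * M (i+1) := by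
    intro i h1 hik
    obtain ⟨ξ, hξI, hξb⟩ := hsmall i h1 hik.le
    apply ciSup_le
    intro x
    have hmv := Convex.norm_image_sub_le_of_norm_hasDerivWithin_le
      (f := D i) (f' := D (i+1)) (s := I) (C := M (i+1))
      (fun y hy => hderivW i hik y hy)
      (fun y hy => by simpa [Real.norm_eq_abs] using hMle (i+1) (by omega) y hy)
      (convex_Icc a (a + L)) hξI x.2
    have hdist : ‖(x:ℝ) - ξ‖ ≤ L := by
      rw [Real.norm_eq_abs]
      obtain ⟨u1, u2⟩ := Set.mem_Icc.1 x.2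
      obtain ⟨v1, v2⟩ := hξI
      exact abs_le.2 ⟨by linarith, by linarith⟩
    have t1 : |D i ↑x| - |D i ξ| ≤ |D i ↑x - D i ξ| := abs_sub_abs_le_abs_sub _ _
    have t2 : |D i ↑x - D i ξ| ≤ M (i+1) * ‖(x:ℝ) - ξ‖ := by
      simpa [Real.norm_eq_abs] using hmv
    have t3 : M (i+1) * ‖(x:ℝ) - ξ‖ ≤ M (i+1) * L :=
      mul_le_mul_of_nonneg_left hdist (hMnn (i+1) (by omega))
    have := hξb
    linarith
  -- downward induction
  have key : ∀ d i, 1 ≤ i → i + d = k →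
      M i ≤ (∑ m ∈ Finset.Ico i k, (2*(m:ℝ))^m) * M 0 / L^i + L^d * M k := by
    intro d
    induction d with
    | zero =>
      intro i h1 hik
      have hik' : i = k := by omega
      subst hik'
      rw [Finset.Ico_self, Finset.sum_empty]
      simp
    | succ d ih =>
      intro i h1 hik
      have hik' : i < k := by omega
      have h2 := ih (i+1) (by omega) (by omega)
      have h3 := hstep i h1 hik'
      have h4 : L * M (i+1) ≤
          L * ((∑ m ∈ Finset.Ico (i+1) k, (2*(m:ℝ))^m) * M 0 / L^(i+1) + L^d * M k) :=
        mul_le_mul_of_nonneg_left h2 hL.le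
      have hLne : L ≠ 0 := ne_of_gt hL
      have e1 : L * ((∑ m ∈ Finset.Ico (i+1) k, (2*(m:ℝ))^m) * M 0 / L^(i+1) + L^d * M k)
          = (∑ m ∈ Finset.Ico (i+1) k, (2*(m:ℝ))^m) * M 0 / L^i + L^(d+1) * M k := by
        rw [pow_succ, pow_succ]
        field_simp
      rw [Finset.sum_eq_sum_Ico_succ_bot hik']
      have e2 : ((2*(i:ℝ))^i + ∑ m ∈ Finset.Ico (i+1) k, (2*(m:ℝ))^m) * M 0 / L^i
          = (2*(i:ℝ))^i * M 0 / L^i + (∑ m ∈ Finset.Ico (i+1) k, (2*(m:ℝ))^m) * M 0 / L^i := by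
        ring
      rw [e2]
      linarith [e1 ▸ h4]
  have hkey := key (k - j) j hj1 (by omega)
  -- sum bound
  have hSb : (∑ m ∈ Finset.Ico j k, (2*(m:ℝ))^m) ≤ (2*(k:ℝ))^(2*k) := by
    have hkR : (1:ℝ) ≤ 2*(k:ℝ) := by
      have : (1:ℝ) ≤ (k:ℝ) := by exact_mod_cast (by omega : 1 ≤ k)
      linarith
    have hterm : ∀ m ∈ Finset.Ico j k, (2*(m:ℝ))^m ≤ (2*(k:ℝ))^k := by
      intro m hm
      obtain ⟨hm1, hm2⟩ := Finset.mem_Ico.1 hm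
      have hmk : (m:ℝ) ≤ (k:ℝ) := by exact_mod_cast hm2.le
      calc (2*(m:ℝ))^m ≤ (2*(k:ℝ))^m := by
            apply pow_le_pow_left₀ (by positivity) (by linarith)
        _ ≤ (2*(k:ℝ))^k := pow_le_pow_right₀ hkR hm2.le
    calc (∑ m ∈ Finset.Ico j k, (2*(m:ℝ))^m) ≤ ∑ _m ∈ Finset.Ico j k, (2*(k:ℝ))^k :=
          Finset.sum_le_sum hterm
      _ = ((k - j : ℕ):ℝ) * (2*(k:ℝ))^k := by
          rw [Finset.sum_const, Nat.card_Ico, nsmul_eq_mul]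
      _ ≤ (2*(k:ℝ))^k * (2*(k:ℝ))^k := by
          apply mul_le_mul_of_nonneg_right _ (by positivity)
          calc ((k - j : ℕ):ℝ) ≤ 2*(k:ℝ) := by
                have : ((k - j : ℕ):ℝ) ≤ (k:ℝ) := by exact_mod_cast (by omega : k - j ≤ k)
                have hk0 : (0:ℝ) ≤ (k:ℝ) := by positivity
                linarith
            _ ≤ (2*(k:ℝ))^k := le_self_pow₀ hkR (by omega)
      _ = (2*(k:ℝ))^(2*k) := by rw [← pow_add]; congr 1; omega
  -- assemble
  have hM0nn : 0 ≤ M 0 := hMnn 0 (by omega)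
  have hLj : (0:ℝ) < L^j := pow_pos hL j
  have h5 : (∑ m ∈ Finset.Ico j k, (2*(m:ℝ))^m) * (M 0 / L^j)
      ≤ (2*(k:ℝ))^(2*k) * (M 0 / L^j) :=
    mul_le_mul_of_nonneg_right hSb (div_nonneg hM0nn hLj.le)
  have e3 : (∑ m ∈ Finset.Ico j k, (2*(m:ℝ))^m) * M 0 / L^j
      = (∑ m ∈ Finset.Ico j k, (2*(m:ℝ))^m) * (M 0 / L^j) := by ring
  have hgoal : M j ≤ (2*(k:ℝ))^(2*k) / L^j * (M 0) + L^(k-j) * M k := by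
    have e4 : (2*(k:ℝ))^(2*k) / L^j * (M 0) = (2*(k:ℝ))^(2*k) * (M 0 / L^j) := by ring
    rw [e4]
    calc M j ≤ (∑ m ∈ Finset.Ico j k, (2*(m:ℝ))^m) * M 0 / L^j + L^(k-j) * M k := hkey
      _ ≤ (2*(k:ℝ))^(2*k) * (M 0 / L^j) + L^(k-j) * M k := by rw [e3]; linarith
  have hM0eq : M 0 = ⨆ x : I, |f ↑x| := by rw [hMdef]; simp only [hD0]
  rw [← hM0eq]
  exact hgoal
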